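/- Let φ, ψ: Mₙ(ℂ) → Mₙ(ℂ) be q-positive maps and for ε ∈ (0,1) set φ_ε = εI + (1−ε)φ and ψ_ε = εI + (1−ε)ψ. Then φ ≥_q ψ if and only if φ_ε ≥_q ψ_ε for all ε ∈ (0,1). -/

import Mathlib

open scoped ComplexOrder BigOperators
open Matrix

abbrev MatC (n : ℕ) := Matrix (Fin n) (Fin n) ℂ

/-- Complete positivity of a linear map on `Mₙ(ℂ)`:
for all finite families `Aᵢ`, `fᵢ`, `∑ ⟨fᵢ, φ(Aᵢ* Aⱼ) fⱼ⟩ ≥ 0`. -/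
def IsCP {n : ℕ} (φ : Module.End ℂ (MatC n)) : Prop :=
  ∀ (m : ℕ) (A : Fin m → MatC n) (f : Fin m → (Fin n → ℂ)),
    0 ≤ ∑ i, ∑ j, star (f i) ⬝ᵥ ((φ ((A i)ᴴ * A j)) *ᵥ f j)

/-- `φ` has no negative (real) eigenvalues. -/
def NoNegEig {n : ℕ} (φ : Module.End ℂ (MatC n)) : Prop :=
  ∀ r : ℝ, r < 0 → ¬ Module.End.HasEigenvalue φ (r : ℂ)

/-- `φ^(t) = φ ∘ (I + t φ)⁻¹`. -/
noncomputable def qRes {n : ℕ} (φ : Module.End ℂ (MatC n)) (t : ℝ) :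
    Module.End ℂ (MatC n) :=
  φ * Ring.inverse (1 + (t : ℂ) • φ)

/-- `φ` is q-positive. -/
def IsQPos {n : ℕ} (φ : Module.End ℂ (MatC n)) : Prop :=
  NoNegEig φ ∧ ∀ t : ℝ, 0 ≤ t → IsCP (qRes φ t)

/-- `φ ≥_q ψ` : `φ(I+tφ)⁻¹ − ψ(I+tψ)⁻¹` is completely positive for all `t ≥ 0`. -/
def qLE {n : ℕ} (ψ φ : Module.End ℂ (MatC n)) : Prop :=
  ∀ t : ℝ, 0 ≤ t → IsCP (qRes φ t - qRes ψ t)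

/-- `φ` is q-pure: its q-subordinates are exactly `{0} ∪ {φ^(s) : s ≥ 0}`. -/
def IsQPure {n : ℕ} (φ : Module.End ℂ (MatC n)) : Prop :=
  IsQPos φ ∧ ∀ ψ : Module.End ℂ (MatC n),
    (IsQPos ψ ∧ qLE ψ φ) ↔ (ψ = 0 ∨ ∃ s : ℝ, 0 ≤ s ∧ ψ = qRes φ s)

/-- `φ_ε = ε I + (1−ε) φ`. -/
noncomputable def epsMap {n : ℕ} (φ : Module.End ℂ (MatC n)) (ε : ℝ) :
    Module.End ℂ (MatC n) :=
  (ε : ℂ) • 1 + ((1 - ε : ℝ) : ℂ) • φ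


lemma isUnit_one_add_smul {n : ℕ} (φ : Module.End ℂ (MatC n)) (hφ : NoNegEig φ)
    (t : ℝ) (ht : 0 ≤ t) : IsUnit (1 + (t:ℂ) • φ) := by
  set u : Module.End ℂ (MatC n) := 1 + (t:ℂ) • φ with hu
  rw [Module.End.isUnit_iff]
  have hinj : Function.Injective u := by
    rw [← LinearMap.ker_eq_bot, LinearMap.ker_eq_bot']
    intro v hv
    rw [hu] at hv
    simp only [LinearMap.add_apply, Module.End.one_apply, LinearMap.smul_apply] at hv
    rcases eq_or_lt_of_le ht with h0 | h0
    · simpa [← h0] using hv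
    · by_contra hne
      have ht0 : (t:ℂ) ≠ 0 := by exact_mod_cast h0.ne'
      have heig : φ v = ((-t⁻¹ : ℝ) : ℂ) • v := by
        have h1 : (t:ℂ) • φ v = -v := by linear_combination (norm := module) hv
        have h2 : ((-t⁻¹ : ℝ) : ℂ) = -(t:ℂ)⁻¹ := by push_cast; ring
        rw [h2, ← smul_right_injective (MatC n) ht0 |>.eq_iff, h1, smul_smul,
          mul_neg, mul_inv_cancel₀ ht0, neg_one_smul]
      exact hφ (-t⁻¹) (by simp [h0]) (Module.End.hasEigenvalue_of_hasEigenvector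
        ⟨Module.End.mem_eigenspace_iff.2 heig, hne⟩)
  exact ⟨hinj, LinearMap.injective_iff_surjective.1 hinj⟩

lemma combo {E : Type*} [Ring E] [Algebra ℂ E] (R P : E) (ε t s : ℂ)
    (hc : (1:ℂ) + t*ε ≠ 0) (hsdef : s*(1+t*ε) = t*(1-ε))
    (hRid : R = 1 - s • P) :
    ε • ((1+t*ε)⁻¹ • R) + (1-ε) • ((1+t*ε)⁻¹ • P)
      = (ε/(1+t*ε)) • (1:E) + ((1-ε)/(1+t*ε)^2) • P := by
  subst hRid
  match_scalars
  · field_simp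
  · field_simp
    have hc' : (1:ℂ) + ε*t ≠ 0 := by rwa [mul_comm]
    rw [div_eq_div_iff hc' (pow_ne_zero 2 hc')]
    linear_combination (-ε) * (1+t*ε) * hsdef

lemma key {n : ℕ} (φ : Module.End ℂ (MatC n)) (ε t : ℝ)
    (hε0 : 0 < ε) (hε1 : ε < 1) (ht : 0 ≤ t)
    (hB : IsUnit (1 + ((t*(1-ε)/(1+t*ε) : ℝ):ℂ) • φ)) :
    qRes (epsMap φ ε) t
      = ((ε/(1+t*ε) : ℝ) : ℂ) • 1
        + (((1-ε)/(1+t*ε)^2 : ℝ) : ℂ) • qRes φ (t*(1-ε)/(1+t*ε)) := by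
  have hc : (0:ℝ) < 1 + t*ε := by nlinarith
  have hcC : ((1+t*ε : ℝ):ℂ) ≠ 0 := by exact_mod_cast hc.ne'
  have hcC' : (1:ℂ) + (t:ℂ)*(ε:ℂ) ≠ 0 := by
    rw [show (1:ℂ) + (t:ℂ)*(ε:ℂ) = ((1+t*ε : ℝ):ℂ) by push_cast; ring]; exact hcC
  set s : ℝ := t*(1-ε)/(1+t*ε) with hs
  have hsC : ((s:ℝ):ℂ) * (1 + (t:ℂ)*(ε:ℂ)) = (t:ℂ) * (1-(ε:ℂ)) := by
    rw [hs]; push_cast; field_simp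
  set B : Module.End ℂ (MatC n) := 1 + ((s:ℝ):ℂ) • φ with hBdef
  set R : Module.End ℂ (MatC n) := Ring.inverse B with hR
  have hBR : B * R = 1 := Ring.mul_inverse_cancel B hB
  have hfact : 1 + (t:ℂ) • epsMap φ ε = ((1:ℂ) + (t:ℂ)*(ε:ℂ)) • B := by
    rw [hBdef, epsMap]
    match_scalars
    · norm_num
    · push_cast at hsC ⊢; linear_combination -hsC
  have hu : IsUnit (1 + (t:ℂ) • epsMap φ ε) := by
    rw [hfact]
    refine ⟨⟨((1:ℂ)+(t:ℂ)*(ε:ℂ)) • B, ((1:ℂ)+(t:ℂ)*(ε:ℂ))⁻¹ • R, ?_, ?_⟩, rfl⟩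
    · rw [smul_mul_assoc, mul_smul_comm, smul_smul, mul_inv_cancel₀ hcC', one_smul, hBR]
    · rw [smul_mul_assoc, mul_smul_comm, smul_smul, inv_mul_cancel₀ hcC', one_smul,
        Ring.inverse_mul_cancel B hB]
  have hinv : Ring.inverse (1 + (t:ℂ) • epsMap φ ε) = ((1:ℂ)+(t:ℂ)*(ε:ℂ))⁻¹ • R := by
    have h1 : (1 + (t:ℂ) • epsMap φ ε) * (((1:ℂ)+(t:ℂ)*(ε:ℂ))⁻¹ • R) = 1 := by
      rw [hfact, smul_mul_assoc, mul_smul_comm, smul_smul,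
        mul_inv_cancel₀ hcC', one_smul, hBR]
    calc Ring.inverse (1 + (t:ℂ) • epsMap φ ε)
        = Ring.inverse (1 + (t:ℂ) • epsMap φ ε) * ((1 + (t:ℂ) • epsMap φ ε)
            * (((1:ℂ)+(t:ℂ)*(ε:ℂ))⁻¹ • R)) := by rw [h1, mul_one]
      _ = (Ring.inverse (1 + (t:ℂ) • epsMap φ ε) * (1 + (t:ℂ) • epsMap φ ε))
            * (((1:ℂ)+(t:ℂ)*(ε:ℂ))⁻¹ • R) := by rw [mul_assoc]
      _ = ((1:ℂ)+(t:ℂ)*(ε:ℂ))⁻¹ • R := by rw [Ring.inverse_mul_cancel _ hu, one_mul]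
  have hRid : R = 1 - ((s:ℝ):ℂ) • (φ * R) := by
    have h2 := hBR
    rw [hBdef, add_mul, one_mul, smul_mul_assoc] at h2
    linear_combination (norm := module) h2
  have hq : qRes φ s = φ * R := by rw [qRes, ← hBdef, ← hR]
  rw [qRes, hinv, epsMap, add_mul, smul_mul_assoc, smul_mul_assoc, one_mul,
    mul_smul_comm, hq, show ((1-ε:ℝ):ℂ) = 1 - (ε:ℂ) from by push_cast; ring,
    combo R (φ * R) (ε:ℂ) (t:ℂ) ((s:ℝ):ℂ) hcC' hsC hRid]
  congr 1
  · congr 1; push_cast; ring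
  · congr 1; push_cast; ring

lemma IsCP.smul_real {n : ℕ} {X : Module.End ℂ (MatC n)} (c : ℝ) (hc : 0 ≤ c)
    (hX : IsCP X) : IsCP ((c:ℂ) • X) := by
  intro m A f
  have h := hX m A f
  have hcc : (0:ℂ) ≤ (c:ℂ) := by exact_mod_cast hc
  calc (0:ℂ) ≤ (c:ℂ) * ∑ i, ∑ j, star (f i) ⬝ᵥ ((X ((A i)ᴴ * A j)) *ᵥ f j) :=
        mul_nonneg hcc h
    _ = _ := by
        simp only [Finset.mul_sum, LinearMap.smul_apply, Matrix.smul_mulVec,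
          dotProduct_smul, smul_eq_mul]

lemma keydiff {n : ℕ} (φ ψ : Module.End ℂ (MatC n))
    (hφ : NoNegEig φ) (hψ : NoNegEig ψ) (ε t : ℝ)
    (hε0 : 0 < ε) (hε1 : ε < 1) (ht : 0 ≤ t) :
    qRes (epsMap φ ε) t - qRes (epsMap ψ ε) t
      = (((1-ε)/(1+t*ε)^2 : ℝ) : ℂ) • (qRes φ (t*(1-ε)/(1+t*ε)) - qRes ψ (t*(1-ε)/(1+t*ε))) := by
  have hs0 : 0 ≤ t*(1-ε)/(1+t*ε) :=
    div_nonneg (mul_nonneg ht (by linarith)) (by nlinarith)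
  rw [key φ ε t hε0 hε1 ht (isUnit_one_add_smul φ hφ _ hs0),
    key ψ ε t hε0 hε1 ht (isUnit_one_add_smul ψ hψ _ hs0)]
  module

/-- For q-positive `φ, ψ`: `φ ≥_q ψ` iff `φ_ε ≥_q ψ_ε` for all `ε ∈ (0,1)`. -/
theorem stmt14 {n : ℕ} (φ ψ : Module.End ℂ (MatC n))
    (hφ : IsQPos φ) (hψ : IsQPos ψ) :
    qLE ψ φ ↔ ∀ ε : ℝ, 0 < ε → ε < 1 → qLE (epsMap ψ ε) (epsMap φ ε) := by
  constructor
  · intro h ε hε0 hε1 t ht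
    have hs0 : 0 ≤ t*(1-ε)/(1+t*ε) :=
      div_nonneg (mul_nonneg ht (by linarith)) (by nlinarith)
    rw [keydiff φ ψ hφ.1 hψ.1 ε t hε0 hε1 ht]
    exact IsCP.smul_real _ (div_nonneg (by linarith) (by positivity)) (h _ hs0)
  · intro h t ht
    have h1t : (0:ℝ) < 1 + t := by linarith
    set ε : ℝ := 1/(2*(1+t)) with hε
    have hε0 : 0 < ε := by rw [hε]; exact div_pos one_pos (by linarith)
    have hε1 : ε < 1 := by
      rw [hε, div_lt_one (by positivity)]
      linarith
    have ht' : (0:ℝ) ≤ 2*t := by linarith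
    have hd := h ε hε0 hε1 (2*t) ht'
    have hkey := keydiff φ ψ hφ.1 hψ.1 ε (2*t) hε0 hε1 ht'
    have hse : 2*t*(1-ε)/(1+2*t*ε) = t := by
      rw [hε]
      field_simp
      ring
    rw [hse] at hkey
    set c : ℝ := (1-ε)/(1+2*t*ε)^2 with hc
    have hc0 : 0 < c := by
      rw [hc]
      have : (0:ℝ) < 1 - ε := by linarith
      positivity
    have hcp : IsCP ((c:ℂ) • (qRes φ t - qRes ψ t)) := by rw [← hkey]; exact hd
    have := IsCP.smul_real (c⁻¹) (by positivity) hcp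
    rwa [smul_smul, show ((c⁻¹:ℝ):ℂ) * (c:ℝ) = 1 from by
      push_cast; field_simp, one_smul] at this
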